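/- For every k ≥ 1 and every n ≥ k + 3, the number of isomorphism classes of blocks on n elements having nullity k that are RC-lattices satisfies |𝓑(n,k)| = Σ_{r=2}^{2k} |𝓑(n,k,r)|, where 𝓑(n,k,r) denotes the isomorphism classes of such blocks having exactly r reducible elements. -/

import Mathlib

/-- An element of a lattice is join-reducible if it is the join of two elements
both distinct from it. -/
def JoinReducible {α : Type*} [Lattice α] (x : α) : Prop :=
  ∃ y z : α, y ≠ x ∧ z ≠ x ∧ y ⊔ z = x

/-- An element of a lattice is meet-reducible if it is the meet of two elements
both distinct from it. -/
def MeetReducible {α : Type*} [Lattice α] (x : α) : Prop :=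
  ∃ y z : α, y ≠ x ∧ z ≠ x ∧ y ⊓ z = x

/-- An element is reducible if it is join-reducible or meet-reducible. -/
def Reducible {α : Type*} [Lattice α] (x : α) : Prop :=
  JoinReducible x ∨ MeetReducible x

/-- `Red(L)`: the set of reducible elements of the lattice. -/
def RedSet (α : Type*) [Lattice α] : Set α := {x | Reducible x}

/-- `Irr(L)`: the set of doubly irreducible (i.e. non-reducible) elements. -/
def IrrSet (α : Type*) [Lattice α] : Set α := {x | ¬ Reducible x}

/-- The cover graph of a poset: vertices are the elements, edges are covering pairs. -/
def coverGraph (α : Type*) [PartialOrder α] : SimpleGraph α where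
  Adj x y := x ⋖ y ∨ y ⋖ x
  symm := ⟨fun _ _ h => h.symm⟩
  loopless := ⟨fun x h => by rcases h with h | h <;> exact h.lt.false⟩

/-- The nullity of a (finite) poset: `m - n + c` where `m` is the number of edges,
`n` the number of vertices and `c` the number of connected components of the cover graph. -/
noncomputable def nullity (α : Type*) [PartialOrder α] : ℤ :=
  (Nat.card (coverGraph α).edgeSet : ℤ) - (Nat.card α : ℤ)
    + (Nat.card (coverGraph α).ConnectedComponent : ℤ)

/-- A block: a (finite) lattice whose greatest element is join-reducible and whose
least element is meet-reducible. -/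
def IsBlock (α : Type*) [Lattice α] : Prop :=
  (∃ t : α, (∀ x, x ≤ t) ∧ JoinReducible t) ∧ (∃ b : α, (∀ x, b ≤ x) ∧ MeetReducible b)

/-- The partial order underlying a lattice structure given as a term. -/
def latPO {n : ℕ} (L : Lattice (Fin n)) : PartialOrder (Fin n) :=
  @SemilatticeInf.toPartialOrder _ (@Lattice.toSemilatticeInf _ L)

/-- `L` is an RC-lattice structure: any two reducible elements are comparable. -/
def IsRCLat {n : ℕ} (L : Lattice (Fin n)) : Prop :=
  ∀ x y : Fin n, @Reducible _ L x → @Reducible _ L y →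
    (latPO L).le x y ∨ (latPO L).le y x

/-- The number of isomorphism classes of lattice structures on `Fin n`
(i.e. of lattices with `n` elements) satisfying `P`. -/
noncomputable def numIsoClasses (n : ℕ) (P : Lattice (Fin n) → Prop) : ℕ :=
  Nat.card (Quot fun (L₁ L₂ : {L : Lattice (Fin n) // P L}) =>
    ∃ e : Fin n ≃ Fin n, ∀ x y : Fin n,
      (latPO L₁.1).le x y ↔ (latPO L₂.1).le (e x) (e y))

/-- `𝓑(n,k)`: blocks on `n` elements of nullity `k` which are RC-lattices. -/
def BlockP (n k : ℕ) (L : Lattice (Fin n)) : Prop :=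
  @IsBlock _ L ∧ @nullity (Fin n) (latPO L) = (k : ℤ) ∧ IsRCLat L

/-- `𝓑(n,k,r)`: members of `𝓑(n,k)` with exactly `r` reducible elements. -/
def BlockPr (n k r : ℕ) (L : Lattice (Fin n)) : Prop :=
  BlockP n k L ∧ (@RedSet _ L).ncard = r

/-- `𝓛(n,k)`: RC-lattices on `n` elements of nullity `k`. -/
def RCLatP (n k : ℕ) (L : Lattice (Fin n)) : Prop :=
  IsRCLat L ∧ @nullity (Fin n) (latPO L) = (k : ℤ)


section AuxLemmas
set_option linter.unusedSectionVars false
open Finset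

variable {α : Type*} [Lattice α] [Finite α]

lemma coverGraph_edge_card :
    Nat.card (coverGraph α).edgeSet = Nat.card {p : α × α // p.1 ⋖ p.2} := by
  refine (Nat.card_congr (Equiv.ofBijective
    (fun p : {p : α × α // p.1 ⋖ p.2} =>
      (⟨s(p.1.1, p.1.2), Or.inl p.2⟩ : (coverGraph α).edgeSet)) ⟨?_, ?_⟩)).symm
  · rintro ⟨⟨a, b⟩, hab⟩ ⟨⟨c, d⟩, hcd⟩ h
    replace h := congrArg Subtype.val h
    simp only [Subtype.mk.injEq, Sym2.eq_iff, Sym2.eq, Sym2.rel_iff', Prod.mk.injEq,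
      Prod.swap_prod_mk] at h
    rcases h with ⟨rfl, rfl⟩ | ⟨rfl, rfl⟩
    · rfl
    · exact absurd (hab.lt.trans hcd.lt) (lt_irrefl _)
  · rintro ⟨e, he⟩
    induction e using Sym2.ind with
    | _ a b =>
      rcases he with h | h
      · exact ⟨⟨(a, b), h⟩, rfl⟩
      · exact ⟨⟨(b, a), h⟩, Subtype.ext (Sym2.eq_swap)⟩

lemma card_pairs_eq_sum_lower [Fintype α] :
    Nat.card {p : α × α // p.1 ⋖ p.2} = ∑ x : α, Nat.card {y : α // y ⋖ x} := by
  have e : {p : α × α // p.1 ⋖ p.2} ≃ Σ x : α, {y : α // y ⋖ x} :=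
    ⟨fun p => ⟨p.1.2, ⟨p.1.1, p.2⟩⟩, fun q => ⟨(q.2.1, q.1), q.2.2⟩,
     fun p => rfl, fun q => rfl⟩
  rw [Nat.card_congr e]
  letI : ∀ x : α, Fintype {y : α // y ⋖ x} := fun x => Fintype.ofFinite _
  simp [Nat.card_eq_fintype_card, Fintype.card_sigma]

lemma exists_ge_covBy {a x : α} (h : a < x) : ∃ y, a ≤ y ∧ y ⋖ x := by
  obtain ⟨y, hy, hmax⟩ := Set.Finite.exists_maximalFor id {w | a ≤ w ∧ w < x}
    (Set.toFinite _) ⟨a, le_refl a, h⟩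
  exact ⟨y, hy.1, hy.2, fun z hz hzx =>
    (not_le_of_gt hz) (hmax (j := z) ⟨hy.1.trans hz.le, hzx⟩ hz.le)⟩

lemma exists_covBy_le {a x : α} (h : x < a) : ∃ y, y ≤ a ∧ x ⋖ y := by
  obtain ⟨y, hy1, hy2⟩ := exists_ge_covBy (α := αᵒᵈ)
    (a := OrderDual.toDual a) (x := OrderDual.toDual x) h
  exact ⟨OrderDual.ofDual y, hy1, hy2.ofDual⟩

lemma not_joinReducible_bot {b : α} (hb : ∀ x, b ≤ x) : ¬ JoinReducible b := by
  rintro ⟨y, z, hy, _, h⟩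
  exact hy (le_antisymm (h ▸ le_sup_left) (hb y))

lemma one_le_card_lower {b x : α} (hb : ∀ y, b ≤ y) (hx : x ≠ b) :
    1 ≤ Nat.card {y : α // y ⋖ x} := by
  obtain ⟨y, -, hy⟩ := exists_ge_covBy ((hb x).lt_of_ne (Ne.symm hx))
  haveI : Nonempty {y : α // y ⋖ x} := ⟨⟨y, hy⟩⟩
  exact Nat.card_pos

lemma two_le_card_lower {x : α} (hx : JoinReducible x) :
    2 ≤ Nat.card {y : α // y ⋖ x} := by
  obtain ⟨u, v, hu, hv, huv⟩ := hx
  have hu' : u < x := lt_of_le_of_ne (huv ▸ le_sup_left) hu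
  have hv' : v < x := lt_of_le_of_ne (huv ▸ le_sup_right) hv
  obtain ⟨y₁, hy₁u, hy₁⟩ := exists_ge_covBy hu'
  obtain ⟨y₂, hy₂v, hy₂⟩ := exists_ge_covBy hv'
  have hne : y₁ ≠ y₂ := by
    rintro rfl
    have hxle : x ≤ y₁ := huv ▸ sup_le hy₁u hy₂v
    exact absurd hxle (not_le_of_gt hy₁.lt)
  haveI : Nontrivial {y : α // y ⋖ x} := ⟨⟨y₁, hy₁⟩, ⟨y₂, hy₂⟩, by simpa⟩
  exact Finite.one_lt_card

lemma jr_bound {b : α} (hb : ∀ x, b ≤ x) :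
    Nat.card {x : α // JoinReducible x} + (Nat.card α - 1)
      ≤ Nat.card (coverGraph α).edgeSet := by
  classical
  letI : Fintype α := Fintype.ofFinite α
  rw [coverGraph_edge_card, card_pairs_eq_sum_lower]
  set J : Finset α := univ.filter (fun x => JoinReducible x) with hJ
  have hbJ : b ∉ J := by simp [hJ, not_joinReducible_bot hb]
  have step1 : ∑ x ∈ univ.erase b, (1 + if JoinReducible x then 1 else 0)
      ≤ ∑ x ∈ univ.erase b, Nat.card {y : α // y ⋖ x} := by
    refine Finset.sum_le_sum fun x hx => ?_
    by_cases h : JoinReducible x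
    · simpa [h] using two_le_card_lower h
    · simpa [h] using one_le_card_lower hb (mem_erase.1 hx).1
  have step2 : ∑ x ∈ univ.erase b, Nat.card {y : α // y ⋖ x}
      ≤ ∑ x : α, Nat.card {y : α // y ⋖ x} :=
    Finset.sum_le_sum_of_subset (erase_subset _ _)
  have lhs_eq : ∑ x ∈ univ.erase b, (1 + if JoinReducible x then 1 else 0)
      = (Nat.card α - 1) + J.card := by
    rw [Finset.sum_add_distrib, Finset.sum_const, smul_eq_mul, mul_one,
      Finset.sum_boole, Finset.card_erase_of_mem (mem_univ b), card_univ]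
    congr 1
    · rw [Nat.card_eq_fintype_card]
    · rw [Finset.filter_erase, Finset.erase_eq_of_notMem hbJ, Nat.cast_id]
  have hJcard : Nat.card {x : α // JoinReducible x} = J.card := by
    rw [Nat.card_eq_fintype_card, hJ, Fintype.card_subtype]
  rw [hJcard]
  omega

lemma reachable_top {t : α} (ht : ∀ x, x ≤ t) (x : α) :
    (coverGraph α).Reachable x t := by
  refine wellFounded_gt.induction
    (C := fun x => (coverGraph α).Reachable x t) x fun x IH => ?_
  rcases eq_or_ne x t with rfl | hne
  · exact SimpleGraph.Reachable.refl _
  · obtain ⟨y, hyt, hxy⟩ := exists_covBy_le ((ht x).lt_of_ne hne)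
    exact (SimpleGraph.Adj.reachable
      (show (coverGraph α).Adj x y from Or.inl hxy)).trans (IH y hxy.lt)

lemma cc_card_eq_one {t : α} (ht : ∀ x, x ≤ t) :
    Nat.card (coverGraph α).ConnectedComponent = 1 := by
  have h : ∀ c : (coverGraph α).ConnectedComponent,
      c = (coverGraph α).connectedComponentMk t :=
    SimpleGraph.ConnectedComponent.ind fun x =>
      SimpleGraph.ConnectedComponent.sound (reachable_top ht x)
  rw [Nat.card_eq_one_iff_unique]
  exact ⟨⟨fun c d => (h c).trans (h d).symm⟩, ⟨(coverGraph α).connectedComponentMk t⟩⟩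

lemma mr_bound {t : α} (ht : ∀ x, x ≤ t) :
    Nat.card {x : α // MeetReducible x} + (Nat.card α - 1)
      ≤ Nat.card (coverGraph α).edgeSet := by
  have h := jr_bound (α := αᵒᵈ) (b := OrderDual.toDual t)
    (fun x => ht (OrderDual.ofDual x))
  have e₁ : {x : αᵒᵈ // JoinReducible x} ≃ {x : α // MeetReducible x} :=
    Equiv.subtypeEquiv OrderDual.ofDual (fun x => Iff.rfl)
  have iso : coverGraph αᵒᵈ ≃g coverGraph α :=
    { toEquiv := OrderDual.ofDual
      map_rel_iff' := by
        intro a b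
        show (OrderDual.ofDual a ⋖ OrderDual.ofDual b ∨
          OrderDual.ofDual b ⋖ OrderDual.ofDual a) ↔ (a ⋖ b ∨ b ⋖ a)
        rw [ofDual_covBy_ofDual_iff, ofDual_covBy_ofDual_iff]
        exact or_comm }
  have hc1 : Nat.card {x : αᵒᵈ // JoinReducible x} = Nat.card {x : α // MeetReducible x} :=
    Nat.card_congr e₁
  have hc2 : Nat.card αᵒᵈ = Nat.card α := Nat.card_congr (OrderDual.ofDual (α := α))
  have hc3 : Nat.card (coverGraph αᵒᵈ).edgeSet = Nat.card (coverGraph α).edgeSet :=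
    Nat.card_congr iso.mapEdgeSet
  rw [hc1, hc2, hc3] at h
  exact h

lemma red_bound {k : ℕ} (hB : IsBlock α)
    (hnull : nullity α = (k : ℤ)) (hcard : 2 ≤ Nat.card α) :
    2 ≤ (RedSet α).ncard ∧ (RedSet α).ncard ≤ 2 * k := by
  obtain ⟨⟨t, ht, htr⟩, ⟨b, hb, hbr⟩⟩ := hB
  have htb : t ≠ b := by
    rintro rfl
    have hss : Subsingleton α :=
      ⟨fun x y => le_antisymm ((ht x).trans (hb y)) ((ht y).trans (hb x))⟩
    have hnt : Nontrivial α := Finite.one_lt_card_iff_nontrivial.1 hcard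
    obtain ⟨x, y, hxy⟩ := hnt
    exact hxy (hss.elim x y)
  constructor
  · calc 2 = ({t, b} : Set α).ncard := (Set.ncard_pair htb).symm
      _ ≤ (RedSet α).ncard := Set.ncard_le_ncard
          (by rintro x (rfl | rfl); exacts [Or.inl htr, Or.inr hbr]) (Set.toFinite _)
  · have hcc := cc_card_eq_one ht
    have hnn : nullity α = (Nat.card (coverGraph α).edgeSet : ℤ)
        - (Nat.card α : ℤ) + (Nat.card (coverGraph α).ConnectedComponent : ℤ) := rfl
    rw [hnn, hcc] at hnull
    have h1 := jr_bound hb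
    have h2 := mr_bound ht
    have hred : (RedSet α).ncard
        ≤ Nat.card {x : α // JoinReducible x} + Nat.card {x : α // MeetReducible x} := by
      have hsub : RedSet α ⊆ {x | JoinReducible x} ∪ {x | MeetReducible x} := fun x hx => hx
      have hJ : Nat.card {x : α // JoinReducible x} = ({x | JoinReducible x} : Set α).ncard :=
        Nat.card_coe_set_eq _
      have hM : Nat.card {x : α // MeetReducible x} = ({x | MeetReducible x} : Set α).ncard :=
        Nat.card_coe_set_eq _
      rw [hJ, hM]
      exact (Set.ncard_le_ncard hsub (Set.toFinite _)).trans (Set.ncard_union_le _ _)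
    omega

end AuxLemmas

section IsoLemmas
variable {β γ : Type*} [Lattice β] [Lattice γ]

lemma equiv_sup (e : β ≃ γ) (he : ∀ x y : β, x ≤ y ↔ e x ≤ e y) (a b : β) :
    e (a ⊔ b) = e a ⊔ e b := by
  apply le_antisymm
  · have h1 : a ≤ e.symm (e a ⊔ e b) := (he _ _).2 (by simp)
    have h2 : b ≤ e.symm (e a ⊔ e b) := (he _ _).2 (by simp)
    have h3 := (he _ _).1 (sup_le h1 h2)
    simpa using h3
  · exact sup_le ((he _ _).1 le_sup_left) ((he _ _).1 le_sup_right)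

lemma equiv_inf (e : β ≃ γ) (he : ∀ x y : β, x ≤ y ↔ e x ≤ e y) (a b : β) :
    e (a ⊓ b) = e a ⊓ e b := by
  apply le_antisymm
  · exact le_inf ((he _ _).1 inf_le_left) ((he _ _).1 inf_le_right)
  · have h1 : e.symm (e a ⊓ e b) ≤ a := (he _ _).2 (by simp)
    have h2 : e.symm (e a ⊓ e b) ≤ b := (he _ _).2 (by simp)
    have h3 := (he _ _).1 (le_inf h1 h2)
    simpa using h3

lemma equiv_reducible (e : β ≃ γ) (he : ∀ x y : β, x ≤ y ↔ e x ≤ e y) (a : β)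
    (ha : Reducible a) : Reducible (e a) := by
  rcases ha with ⟨u, v, hu, hv, huv⟩ | ⟨u, v, hu, hv, huv⟩
  · exact Or.inl ⟨e u, e v, fun h => hu (e.injective h), fun h => hv (e.injective h),
      by rw [← equiv_sup e he, huv]⟩
  · exact Or.inr ⟨e u, e v, fun h => hu (e.injective h), fun h => hv (e.injective h),
      by rw [← equiv_inf e he, huv]⟩

lemma equiv_red_ncard (e : β ≃ γ) (he : ∀ x y : β, x ≤ y ↔ e x ≤ e y) :
    (RedSet β).ncard = (RedSet γ).ncard := by
  have he' : ∀ x y : γ, x ≤ y ↔ e.symm x ≤ e.symm y := by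
    intro x y
    rw [he (e.symm x) (e.symm y), Equiv.apply_symm_apply, Equiv.apply_symm_apply]
  have himg : RedSet γ = e '' RedSet β := by
    ext x
    constructor
    · intro hx
      exact ⟨e.symm x, equiv_reducible e.symm he' x hx, e.apply_symm_apply x⟩
    · rintro ⟨y, hy, rfl⟩
      exact equiv_reducible e he y hy
  rw [himg, Set.ncard_image_of_injective _ e.injective]

end IsoLemmas

lemma red_ncard_invariant {n : ℕ} (L₁ L₂ : Lattice (Fin n)) (e : Fin n ≃ Fin n)
    (he : ∀ x y : Fin n, (latPO L₁).le x y ↔ (latPO L₂).le (e x) (e y)) :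
    (@RedSet _ L₁).ncard = (@RedSet _ L₂).ncard :=
  @equiv_red_ncard (Fin n) (Fin n) L₁ L₂ e (fun x y => he x y)

lemma finite_lattice (n : ℕ) : Finite (Lattice (Fin n)) := by
  have hinj : Function.Injective (fun L : Lattice (Fin n) => (latPO L).le) := by
    intro L₁ L₂ h
    apply Lattice.ext
    intro x y
    exact iff_of_eq (congrFun (congrFun h x) y)
  exact Finite.of_injective _ hinj

lemma quot_card_partition {X : Type*} [Finite X] (P : X → Prop) (R : X → X → Prop)
    (f : X → ℕ) (s : Finset ℕ) (hmem : ∀ x, P x → f x ∈ s)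
    (hinv : ∀ x y, R x y → f x = f y) :
    Nat.card (Quot fun (a b : {x // P x}) => R a.1 b.1) =
      ∑ r ∈ s, Nat.card (Quot fun (a b : {x // P x ∧ f x = r}) => R a.1 b.1) := by
  classical
  have hEq : ∀ a b : {x // P x},
      Relation.EqvGen (fun u v : {x // P x} => R u.1 v.1) a b → f a.1 = f b.1 := by
    intro a b h
    induction h with
    | rel _ _ h => exact hinv _ _ h
    | refl => rfl
    | symm _ _ _ ih => exact ih.symm
    | trans _ _ _ _ _ ih1 ih2 => exact ih1.trans ih2
  have hlift : ∀ (r : {r // r ∈ s}) (a b : {x // P x}),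
      Relation.EqvGen (fun u v : {x // P x} => R u.1 v.1) a b →
      ∀ (ha : f a.1 = r.1) (hb : f b.1 = r.1),
        (Quot.mk (fun (a b : {x // P x ∧ f x = r.1}) => R a.1 b.1) ⟨a.1, a.2, ha⟩
          : Quot fun (a b : {x // P x ∧ f x = r.1}) => R a.1 b.1)
          = Quot.mk _ ⟨b.1, b.2, hb⟩ := by
    intro r a b h
    induction h with
    | rel u v h => intro ha hb; exact Quot.sound h
    | refl u => intro ha hb; rfl
    | symm u v h ih => intro ha hb; exact (ih hb ha).symm
    | trans u v w h1 h2 ih1 ih2 =>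
        intro ha hc
        have hb : f v.1 = r.1 := (hEq u v h1).symm.trans ha
        exact (ih1 ha hb).trans (ih2 hb hc)
  set T : {r // r ∈ s} → Type _ :=
    fun r => Quot fun (a b : {x // P x ∧ f x = r.1}) => R a.1 b.1 with hT
  let g : (Σ r : {r // r ∈ s}, T r) → Quot (fun (a b : {x // P x}) => R a.1 b.1) :=
    fun q => Quot.lift (fun (x : {x // P x ∧ f x = q.1.1}) => Quot.mk _ (⟨x.1, x.2.1⟩ : {x // P x}))
      (fun a b h => Quot.sound h) q.2
  have hg : Function.Bijective g := by
    constructor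
    · rintro ⟨r₁, q₁⟩ ⟨r₂, q₂⟩ h
      obtain ⟨x, rfl⟩ := Quot.exists_rep q₁
      obtain ⟨y, rfl⟩ := Quot.exists_rep q₂
      have h' : (Quot.mk _ (⟨x.1, x.2.1⟩ : {x // P x})
          : Quot fun (a b : {x // P x}) => R a.1 b.1)
          = Quot.mk _ (⟨y.1, y.2.1⟩ : {x // P x}) := h
      have hE := Quot.eq.1 h'
      have hf : f x.1 = f y.1 := hEq _ _ hE
      have hr : r₁ = r₂ := Subtype.ext (by rw [← x.2.2, ← y.2.2, hf])
      subst hr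
      exact congrArg (Sigma.mk r₁) (hlift r₁ ⟨x.1, x.2.1⟩ ⟨y.1, y.2.1⟩ hE x.2.2 y.2.2)
    · intro q
      obtain ⟨x, rfl⟩ := Quot.exists_rep q
      exact ⟨⟨⟨f x.1, hmem x.1 x.2⟩, Quot.mk _ ⟨x.1, x.2, rfl⟩⟩, rfl⟩
  rw [← Nat.card_eq_of_bijective g hg]
  letI : ∀ r : {r // r ∈ s}, Fintype (T r) := fun r => Fintype.ofFinite _
  rw [Nat.card_eq_fintype_card, Fintype.card_sigma,
    ← Finset.sum_coe_sort s]
  exact Finset.sum_congr rfl fun r _ => (Nat.card_eq_fintype_card).symm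


/-- For `k ≥ 1` and `n ≥ k + 3`: `|𝓑(n,k)| = Σ_{r=2}^{2k} |𝓑(n,k,r)|`. -/
theorem stmt12 (n k : ℕ) (hk : 1 ≤ k) (hn : k + 3 ≤ n) :
    numIsoClasses n (BlockP n k) =
      ∑ r ∈ Finset.Icc 2 (2 * k), numIsoClasses n (BlockPr n k r) := by
  haveI : Finite (Lattice (Fin n)) := finite_lattice n
  have hmem : ∀ L : Lattice (Fin n), BlockP n k L →
      (@RedSet _ L).ncard ∈ Finset.Icc 2 (2 * k) := by
    intro L hL
    letI := L
    have hcard : 2 ≤ Nat.card (Fin n) := by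
      rw [Nat.card_eq_fintype_card, Fintype.card_fin]; omega
    obtain ⟨h1, h2⟩ := red_bound hL.1 hL.2.1 hcard
    exact Finset.mem_Icc.2 ⟨h1, h2⟩
  have hinv : ∀ L₁ L₂ : Lattice (Fin n),
      (∃ e : Fin n ≃ Fin n, ∀ x y : Fin n,
        (latPO L₁).le x y ↔ (latPO L₂).le (e x) (e y)) →
      (fun L : Lattice (Fin n) => (@RedSet _ L).ncard) L₁
        = (fun L : Lattice (Fin n) => (@RedSet _ L).ncard) L₂ := by
    rintro L₁ L₂ ⟨e, he⟩
    exact red_ncard_invariant L₁ L₂ e he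
  exact quot_card_partition (BlockP n k)
    (fun L₁ L₂ => ∃ e : Fin n ≃ Fin n, ∀ x y : Fin n,
      (latPO L₁).le x y ↔ (latPO L₂).le (e x) (e y))
    (fun L => (@RedSet _ L).ncard) (Finset.Icc 2 (2 * k)) hmem hinv
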